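/- arXiv:2212.06101 — 3 statements merged into one kernel-verified Lean document; each statement's English description precedes it below -/
import Mathlib

section
/- For integers r ≥ 1 and n with n ≥ 3r/2, the star saturation number satisfies sat(n, K_{1,r}) = ⌈(r-1)n/2 - r²/8⌉. -/
open Filter Real
open scoped Classical

noncomputable def edgeCount {V : Type*} (G : SimpleGraph V) : ℕ := G.edgeSet.ncard

noncomputable def natDeg {V : Type*} (G : SimpleGraph V) (v : V) : ℕ := (G.neighborSet v).ncard

def addEdge {V : Type*} (G : SimpleGraph V) (u v : V) : SimpleGraph V :=
  G ⊔ SimpleGraph.fromEdgeSet {s(u, v)}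

def StarSatIn {V : Type*} (r : ℕ) (G H : SimpleGraph V) : Prop :=
  H ≤ G ∧ (∀ v, natDeg H v < r) ∧
  ∀ u v : V, G.Adj u v → ¬ H.Adj u v → ∃ w, r ≤ natDeg (addEdge H u v) w

noncomputable def starSat {V : Type*} (r : ℕ) (G : SimpleGraph V) : ℕ :=
  sInf { m | ∃ H : SimpleGraph V, StarSatIn r G H ∧ edgeCount H = m }

noncomputable def gnpProb (n : ℕ) (p : ℝ) (P : SimpleGraph (Fin n) → Prop) : ℝ :=
  ∑ G : SimpleGraph (Fin n),
    if P G then p ^ edgeCount G * (1 - p) ^ (n.choose 2 - edgeCount G) else 0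

noncomputable def x0 (p ε : ℝ) (n : ℕ) : ℕ :=
  (⌊2 * Real.logb (1/(1-p)) n - 2 * Real.logb (1/(1-p)) (Real.logb (1/(1-p)) n)
      + 2 * Real.logb (1/(1-p)) (Real.exp 1 / 2) + 1 + ε⌋).toNat

noncomputable def inducedEdges {n : ℕ} (G : SimpleGraph (Fin n)) (S : Finset (Fin n)) : ℕ :=
  {e | e ∈ G.edgeSet ∧ ∀ v ∈ e, v ∈ S}.ncard

def HasHamPower (ℓ : ℕ) {V : Type*} [Fintype V] (G : SimpleGraph V) : Prop :=
  ∃ σ : ZMod (Fintype.card V) ≃ V, ∀ i : ZMod (Fintype.card V), ∀ d : ℕ, 1 ≤ d → d ≤ ℓ →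
    G.Adj (σ i) (σ (i + (d : ZMod (Fintype.card V))))

def cyclePower (n ℓ : ℕ) : SimpleGraph (Fin n) where
  Adj i j := i ≠ j ∧ ∃ d : ℕ, 1 ≤ d ∧ d ≤ ℓ ∧ ((i.val + d) % n = j.val ∨ (j.val + d) % n = i.val)
  symm := ⟨fun i j ⟨h, d, h1, h2, h3⟩ => ⟨h.symm, d, h1, h2, h3.symm⟩⟩
  loopless := ⟨fun i h => h.1 rfl⟩

def antipodal (n : ℕ) : SimpleGraph (Fin n) where
  Adj i j := i ≠ j ∧ ((i.val + n/2) % n = j.val ∨ (j.val + n/2) % n = i.val)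
  symm := ⟨fun i j ⟨h, h2⟩ => ⟨h.symm, h2.symm⟩⟩
  loopless := ⟨fun i h => h.1 rfl⟩

section general
variable {V : Type*} [Fintype V] (G : SimpleGraph V)

lemma natDeg_eq_degree [DecidableRel G.Adj] (v : V) : natDeg G v = G.degree v := by
  rw [natDeg, SimpleGraph.degree, ← Set.ncard_coe_finset]
  congr 1
  simp [SimpleGraph.neighborFinset]

lemma edgeCount_eq [DecidableRel G.Adj] : edgeCount G = G.edgeFinset.card := by
  rw [edgeCount, ← Set.ncard_coe_finset]
  congr 1
  simp

lemma handshake : ∑ v, natDeg G v = 2 * edgeCount G := by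
  classical
  simp_rw [natDeg_eq_degree, edgeCount_eq]
  exact G.sum_degrees_eq_twice_card_edges

lemma addEdge_adj {u v a b : V} :
    (addEdge G u v).Adj a b ↔ G.Adj a b ∨ (a ≠ b ∧ ((a = u ∧ b = v) ∨ (a = v ∧ b = u))) := by
  simp only [addEdge, SimpleGraph.sup_adj, SimpleGraph.fromEdgeSet_adj, Set.mem_singleton_iff,
    Sym2.eq_iff]
  tauto

lemma natDeg_addEdge_fst {u v : V} (huv : u ≠ v) (h : ¬G.Adj u v) :
    natDeg (addEdge G u v) u = natDeg G u + 1 := by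
  have : (addEdge G u v).neighborSet u = insert v (G.neighborSet u) := by
    ext x
    simp only [SimpleGraph.mem_neighborSet, addEdge_adj, Set.mem_insert_iff]
    constructor
    · intro h2; rcases h2 with hx | ⟨hne, h3⟩ <;> [tauto; (rcases h3 with ⟨h4,h5⟩|⟨h4,h5⟩ <;> subst h5 <;> tauto)]
    · rintro (rfl | hx) <;> tauto
  rw [natDeg, this, Set.ncard_insert_of_notMem (by simpa using h) (Set.toFinite _), natDeg]

lemma natDeg_addEdge_snd {u v : V} (huv : u ≠ v) (h : ¬G.Adj u v) :
    natDeg (addEdge G u v) v = natDeg G v + 1 := by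
  have : addEdge G u v = addEdge G v u := by
    unfold addEdge
    rw [Sym2.eq_swap]
  rw [this]
  exact natDeg_addEdge_fst G huv.symm (fun hh => h hh.symm)

lemma natDeg_addEdge_fst_le {u v : V} :
    natDeg (addEdge G u v) u ≤ natDeg G u + 1 := by
  have : (addEdge G u v).neighborSet u ⊆ insert v (G.neighborSet u) := by
    intro x hx
    simp only [SimpleGraph.mem_neighborSet, addEdge_adj] at hx
    rcases hx with hx | ⟨hne, ⟨h4,h5⟩ | ⟨h4,h5⟩⟩ <;> subst_vars <;> simp_all
  calc natDeg (addEdge G u v) u ≤ (insert v (G.neighborSet u)).ncard :=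
        Set.ncard_le_ncard this (Set.toFinite _)
    _ ≤ natDeg G u + 1 := Set.ncard_insert_le _ _

lemma natDeg_addEdge_other {u v w : V} (hu : w ≠ u) (hv : w ≠ v) :
    natDeg (addEdge G u v) w = natDeg G w := by
  unfold natDeg
  congr 1
  ext x
  simp only [SimpleGraph.mem_neighborSet, addEdge_adj]
  constructor
  · rintro (hx | ⟨hne, ⟨rfl, rfl⟩ | ⟨rfl, rfl⟩⟩) <;> tauto
  · tauto

end general

lemma lowerBound {n r : ℕ} (hr : 1 ≤ r) (H : SimpleGraph (Fin n))
    (hH : (H ≤ (⊤ : SimpleGraph (Fin n))) ∧ (∀ v, natDeg H v < r) ∧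
      ∀ u v : Fin n, (⊤ : SimpleGraph (Fin n)).Adj u v → ¬ H.Adj u v →
        ∃ w, r ≤ natDeg (addEdge H u v) w) :
    4 * ((r : ℤ) - 1) * n ≤ 8 * edgeCount H + r ^ 2 := by
  classical
  obtain ⟨-, hdeg, hsat⟩ := hH
  set S : Finset (Fin n) := Finset.univ.filter (fun v => natDeg H v + 1 < r) with hS
  -- S is a clique
  have hclique : ∀ u ∈ S, ∀ v ∈ S, u ≠ v → H.Adj u v := by
    intro u hu v hv huv
    by_contra hadj
    obtain ⟨w, hw⟩ := hsat u v (by simp [huv]) hadj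
    simp only [hS, Finset.mem_filter] at hu hv
    rcases eq_or_ne w u with rfl | h1
    · have := natDeg_addEdge_fst_le H (u := w) (v := v); omega
    rcases eq_or_ne w v with rfl | h2
    · have : addEdge H u w = addEdge H w u := by unfold addEdge; rw [Sym2.eq_swap]
      rw [this] at hw
      have := natDeg_addEdge_fst_le H (u := w) (v := u); omega
    · rw [natDeg_addEdge_other H h1 h2] at hw
      have := hdeg w; omega
  have hdegS : ∀ v ∈ S, S.card - 1 ≤ natDeg H v := by
    intro v hv
    have hsub : (S.erase v : Finset (Fin n)) ⊆ (H.neighborFinset v) := by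
      intro u hu
      rw [Finset.mem_erase] at hu
      rw [SimpleGraph.mem_neighborFinset]
      exact (hclique u hu.2 v hv hu.1).symm
    have := Finset.card_le_card hsub
    rw [Finset.card_erase_of_mem hv] at this
    rwa [natDeg_eq_degree]
  have hdegO : ∀ v, v ∉ S → r - 1 ≤ natDeg H v := by
    intro v hv
    simp only [hS, Finset.mem_filter, Finset.mem_univ, true_and, not_lt] at hv
    omega
  have hsum : ∑ v, natDeg H v = 2 * edgeCount H := handshake H
  set σ := S.card with hσ
  have hsum_ge : σ * (σ - 1) + (n - σ) * (r - 1) ≤ ∑ v, natDeg H v := by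
    rw [← Finset.sum_add_sum_compl S (natDeg H)]
    have h1 : σ * (σ - 1) ≤ ∑ v ∈ S, natDeg H v := by
      calc σ * (σ - 1) = ∑ _v ∈ S, (σ - 1) := by rw [Finset.sum_const, smul_eq_mul]
        _ ≤ _ := Finset.sum_le_sum (fun v hv => hdegS v hv)
    have h2 : (n - σ) * (r - 1) ≤ ∑ v ∈ Sᶜ, natDeg H v := by
      have hc : (Sᶜ : Finset (Fin n)).card = n - σ := by
        rw [Finset.card_compl]; simp [hσ]
      calc (n - σ) * (r - 1) = ∑ _v ∈ Sᶜ, (r - 1) := by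
            rw [Finset.sum_const, smul_eq_mul, hc]
        _ ≤ _ := Finset.sum_le_sum (fun v hv => hdegO v (by simpa using hv))
    omega
  have hσn : σ ≤ n := by simpa [hσ] using Finset.card_le_univ S
  -- conclude in ℤ
  have h2E : (σ : ℤ) * (σ - 1) + (n - σ) * (r - 1) ≤ 2 * edgeCount H := by
    rcases Nat.eq_zero_or_pos σ with h0 | h1
    · have h3 : (n - σ) * (r - 1) ≤ 2 * edgeCount H := by omega
      have h4 := (Nat.cast_le (α := ℤ)).mpr h3
      have e1 : ((n - σ) * (r - 1) : ℕ) = ((n : ℤ) - σ) * ((r : ℤ) - 1) := by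
        push_cast [Nat.cast_sub hσn, Nat.cast_sub hr]; ring
      rw [e1] at h4
      rw [h0]; push_cast; rw [h0] at h4; push_cast at h4; linarith
    · have h3 : σ * (σ - 1) + (n - σ) * (r - 1) ≤ 2 * edgeCount H := by omega
      have h4 := (Nat.cast_le (α := ℤ)).mpr h3
      have e1 : ((σ * (σ - 1) + (n - σ) * (r - 1) : ℕ) : ℤ)
          = (σ : ℤ) * ((σ : ℤ) - 1) + ((n : ℤ) - σ) * ((r : ℤ) - 1) := by
        push_cast [Nat.cast_sub hσn, Nat.cast_sub h1, Nat.cast_sub hr]; ring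
      rw [e1] at h4
      push_cast at h4
      linarith
  nlinarith [sq_nonneg (2 * (σ : ℤ) - r), h2E]

def circAdj (m k : ℕ) (a b : ZMod m) : Prop :=
  ∃ d : ℕ, 1 ≤ d ∧ d ≤ k ∧ (b = a + (d : ZMod m) ∨ a = b + (d : ZMod m))

def matchAdj (m : ℕ) (a b : ZMod m) : Prop :=
  (b = a + ((m/2 : ℕ) : ZMod m) ∧ a.val < m/2) ∨ (a = b + ((m/2 : ℕ) : ZMod m) ∧ b.val < m/2)

def crossP (r m : ℕ) (a : Fin (r/2)) (b : ZMod m) : Prop :=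
  r % 2 = 0 ∧ m % 2 = 1 ∧ a.val = 0 ∧ b = -1

def consAdj (r m : ℕ) : (Fin (r/2) ⊕ ZMod m) → (Fin (r/2) ⊕ ZMod m) → Prop
  | .inl _, .inl _ => True
  | .inr a, .inr b => circAdj m ((r-1)/2) a b ∨ (r % 2 = 0 ∧ matchAdj m a b)
  | .inl a, .inr b => crossP r m a b
  | .inr b, .inl a => crossP r m a b

lemma circAdj_symm {m k : ℕ} {a b : ZMod m} (h : circAdj m k a b) : circAdj m k b a := by
  obtain ⟨d, h1, h2, h3⟩ := h; exact ⟨d, h1, h2, h3.symm⟩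

lemma matchAdj_symm {m : ℕ} {a b : ZMod m} (h : matchAdj m a b) : matchAdj m b a := h.symm

def consG (r m : ℕ) : SimpleGraph (Fin (r/2) ⊕ ZMod m) where
  Adj x y := x ≠ y ∧ consAdj r m x y
  symm := by
    constructor
    rintro x y ⟨h1, h2⟩
    refine ⟨Ne.symm h1, ?_⟩
    rcases x with a | a <;> rcases y with b | b <;> simp only [consAdj] at h2 ⊢
    · exact h2
    · exact h2
    · rcases h2 with hc | ⟨he, hma⟩
      · exact Or.inl (circAdj_symm hc)
      · exact Or.inr ⟨he, matchAdj_symm hma⟩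
  loopless := ⟨fun x h => h.1 rfl⟩

section zmodtool
variable {m : ℕ} [NeZero m]

lemma zmod_cast_inj {d d' : ℕ} (h : (d : ZMod m) = d') (hd : d < m) (hd' : d' < m) : d = d' := by
  have := congrArg ZMod.val h
  rwa [ZMod.val_cast_of_lt hd, ZMod.val_cast_of_lt hd'] at this

lemma zmod_add_ne_self {b : ZMod m} {d : ℕ} (h1 : 0 < d) (h2 : d < m) : b + (d : ZMod m) ≠ b := by
  intro h
  have : (d : ZMod m) = ((0 : ℕ) : ZMod m) := by
    have := add_left_cancel (a := b) (b := (d : ZMod m)) (c := 0) (by simpa using h)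
    simpa using this
  have := zmod_cast_inj this h2 (by omega : (0:ℕ) < m)
  omega

lemma zmod_sub_natCast (b : ZMod m) {d : ℕ} (hd : d ≤ m) :
    b - (d : ZMod m) = b + ((m - d : ℕ) : ZMod m) := by
  have : ((m - d : ℕ) : ZMod m) = - (d : ZMod m) := by
    have h2 : ((m - d : ℕ) : ZMod m) + (d : ZMod m) = 0 := by
      rw [← Nat.cast_add]
      have : m - d + d = m := by omega
      rw [this, ZMod.natCast_self]
    linear_combination h2
  rw [this]; ring

lemma zmod_val_add_natCast (b : ZMod m) {d : ℕ} (hd : d < m) :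
    (b + (d : ZMod m)).val = (b.val + d) % m := by
  rw [ZMod.val_add, ZMod.val_cast_of_lt hd]

lemma zmod_neg_one_iff (b : ZMod m) : b = -1 ↔ b.val = m - 1 := by
  obtain ⟨m', rfl⟩ : ∃ m', m = m' + 1 := ⟨m - 1, by have := NeZero.pos m; omega⟩
  constructor
  · rintro rfl; exact ZMod.val_neg_one m'
  · intro h
    apply ZMod.val_injective
    rw [h, ZMod.val_neg_one]
    simp

end zmodtool

section construction
variable {m : ℕ} [NeZero m]

lemma val_add_nat (b : ZMod m) {d : ℕ} (hd : d < m) :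
    (b + (d : ZMod m)).val = if b.val + d < m then b.val + d else b.val + d - m := by
  rw [zmod_val_add_natCast _ hd]
  have hb := ZMod.val_lt b
  split
  · exact Nat.mod_eq_of_lt ‹_›
  · rw [Nat.mod_eq_sub_mod (by omega), Nat.mod_eq_of_lt (by omega)]

def Fcirc (k : ℕ) (b : ZMod m) : Finset (ZMod m) :=
  ((Finset.Icc 1 k).image fun d : ℕ => b + (d : ZMod m)) ∪
  ((Finset.Icc 1 k).image fun d : ℕ => b - (d : ZMod m))

lemma mem_Fcirc {k : ℕ} {b c : ZMod m} :
    c ∈ Fcirc k b ↔ circAdj m k b c := by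
  simp only [Fcirc, Finset.mem_union, Finset.mem_image, Finset.mem_Icc, circAdj]
  constructor
  · rintro (⟨d, ⟨h1, h2⟩, rfl⟩ | ⟨d, ⟨h1, h2⟩, rfl⟩)
    · exact ⟨d, h1, h2, Or.inl rfl⟩
    · exact ⟨d, h1, h2, Or.inr (by ring)⟩
  · rintro ⟨d, h1, h2, rfl | hcb⟩
    · exact Or.inl ⟨d, ⟨h1, h2⟩, rfl⟩
    · exact Or.inr ⟨d, ⟨h1, h2⟩, by rw [hcb]; ring⟩

lemma card_Fcirc {k : ℕ} (hk : 2 * k < m) (b : ZMod m) : (Fcirc k b).card = 2 * k := by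
  have hinj1 : Set.InjOn (fun d : ℕ => b + (d : ZMod m)) (Finset.Icc 1 k) := by
    intro d hd d' hd' h
    simp only [Finset.coe_Icc, Set.mem_Icc] at hd hd'
    exact zmod_cast_inj (by linear_combination h) (by omega) (by omega)
  have hinj2 : Set.InjOn (fun d : ℕ => b - (d : ZMod m)) (Finset.Icc 1 k) := by
    intro d hd d' hd' h
    simp only [Finset.coe_Icc, Set.mem_Icc] at hd hd'
    exact zmod_cast_inj (by linear_combination -h) (by omega) (by omega)
  have hdisj : Disjoint ((Finset.Icc 1 k).image fun d : ℕ => b + (d : ZMod m))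
      ((Finset.Icc 1 k).image fun d : ℕ => b - (d : ZMod m)) := by
    rw [Finset.disjoint_left]
    rintro x hx hx'
    simp only [Finset.mem_image, Finset.mem_Icc] at hx hx'
    obtain ⟨d, ⟨hd1, hd2⟩, rfl⟩ := hx
    obtain ⟨d', ⟨hd1', hd2'⟩, he⟩ := hx'
    rw [zmod_sub_natCast b (by omega)] at he
    have : m - d' = d := zmod_cast_inj (by linear_combination he) (by omega) (by omega)
    omega
  rw [Fcirc, Finset.card_union_of_disjoint hdisj,
    Finset.card_image_of_injOn hinj1, Finset.card_image_of_injOn hinj2,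
    Nat.card_Icc]
  omega

lemma not_mem_Fcirc {k : ℕ} (hk : 2 * k < m) (b : ZMod m) : b ∉ Fcirc k b := by
  intro hb
  rw [mem_Fcirc] at hb
  obtain ⟨d, h1, h2, h3 | h3⟩ := hb
  · exact zmod_add_ne_self (m := m) (by omega) (by omega) h3.symm
  · exact zmod_add_ne_self (m := m) (by omega) (by omega) h3.symm

def Fmatch (r : ℕ) (b : ZMod m) : Finset (ZMod m) :=
  if r % 2 = 0 ∧ b.val < 2 * (m / 2) then
    {if b.val < m / 2 then b + ((m / 2 : ℕ) : ZMod m) else b - ((m / 2 : ℕ) : ZMod m)}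
  else ∅

lemma mem_Fmatch {r : ℕ} (hm2 : r % 2 = 0 → 2 ≤ m) {b c : ZMod m} :
    c ∈ Fmatch r b ↔ (r % 2 = 0 ∧ matchAdj m b c) := by
  rcases Nat.eq_zero_or_pos (r % 2) with hre | hro
  swap
  · have hr1 : r % 2 = 1 := by omega
    simp [Fmatch, hr1]
  have hm2' := hm2 hre
  have hh1 : 1 ≤ m / 2 := by omega
  have hhm : m / 2 < m := by omega
  have h2h : 2 * (m / 2) ≤ m := by omega
  have hb := ZMod.val_lt b
  have hc := ZMod.val_lt c
  simp only [Fmatch, hre, true_and, matchAdj]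
  rcases lt_or_ge b.val (m / 2) with hbv | hbv
  · have hcond : b.val < 2 * (m / 2) := by omega
    simp only [hcond, if_pos, if_pos hbv, Finset.mem_singleton]
    constructor
    · rintro rfl
      exact Or.inl ⟨rfl, hbv⟩
    · rintro (⟨rfl, -⟩ | ⟨hbc, hcv⟩)
      · rfl
      · exfalso
        have : b.val = c.val + m / 2 := by
          rw [hbc, val_add_nat _ hhm]
          split <;> omega
        omega
  · rcases lt_or_ge b.val (2 * (m / 2)) with hbv2 | hbv2
    · simp only [if_pos (show b.val < 2 * (m/2) from hbv2), if_neg (show ¬ b.val < m / 2 by omega),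
        Finset.mem_singleton]
      have hvalsub : (b - ((m / 2 : ℕ) : ZMod m)).val = b.val - m / 2 := by
        rw [zmod_sub_natCast b (by omega), val_add_nat _ (by omega)]
        split <;> omega
      constructor
      · rintro rfl
        refine Or.inr ⟨by ring, by omega⟩
      · rintro (⟨-, hcv⟩ | ⟨hbc, hcv⟩)
        · omega
        · rw [hbc]; ring
    · simp only [if_neg (show ¬ b.val < 2 * (m/2) by omega), Finset.notMem_empty, false_iff]
      rintro (⟨-, hcv⟩ | ⟨hbc, hcv⟩)
      · omega
      · have : b.val = c.val + m / 2 := by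
          rw [hbc, val_add_nat _ hhm]
          split <;> omega
        omega

lemma card_Fmatch {r : ℕ} (b : ZMod m) :
    (Fmatch r b).card = if r % 2 = 0 ∧ b.val < 2 * (m / 2) then 1 else 0 := by
  rw [Fmatch]
  split <;> simp

lemma Fmatch_disj {r k : ℕ} (hk : k < m / 2) (hkm : 2 * k < m) (b : ZMod m) :
    Disjoint (Fcirc k b) (Fmatch r b) := by
  have h2h : 2 * (m / 2) ≤ m := by omega
  rw [Finset.disjoint_left]
  intro x hx hx'
  rw [mem_Fcirc] at hx
  rw [Fmatch] at hx'
  split at hx' <;> simp only [Finset.mem_singleton, Finset.notMem_empty] at hx'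
  obtain ⟨d, h1, h2, h3 | h3⟩ := hx
  · subst h3
    split at hx'
    · have : d = m / 2 := zmod_cast_inj (by linear_combination hx') (by omega) (by omega)
      omega
    · rw [zmod_sub_natCast b (by omega)] at hx'
      have : d = m - m / 2 := zmod_cast_inj (by linear_combination hx') (by omega) (by omega)
      omega
  · have h3' : x = b - (d : ZMod m) := by rw [h3]; ring
    subst h3'
    rw [zmod_sub_natCast b (by omega)] at hx'
    split at hx'
    · have : m - d = m / 2 := zmod_cast_inj (by linear_combination hx') (by omega) (by omega)
      omega
    · rw [zmod_sub_natCast b (by omega)] at hx'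
      have : m - d = m - m / 2 := zmod_cast_inj (by linear_combination hx') (by omega) (by omega)
      omega

lemma not_mem_Fmatch {r : ℕ} (b : ZMod m) : b ∉ Fmatch r b := by
  rw [Fmatch]
  split
  · rename_i hcond
    have hh1 : 1 ≤ m / 2 := by omega
    simp only [Finset.mem_singleton]
    split
    · intro h
      exact zmod_add_ne_self (m := m) (by omega) (by omega) h.symm
    · intro h
      rw [zmod_sub_natCast b (by omega)] at h
      exact zmod_add_ne_self (m := m) (b := b) (d := m - m / 2) (by omega) (by omega) h.symm
  · simp

end construction

section construction2
variable {r m : ℕ} [NeZero m]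

def Fcross (r m : ℕ) [NeZero m] (b : ZMod m) : Finset (Fin (r / 2)) :=
  if r % 2 = 0 ∧ m % 2 = 1 ∧ b = -1 then Finset.univ.filter (fun a => a.val = 0) else ∅

lemma mem_Fcross {b : ZMod m} {a : Fin (r / 2)} :
    a ∈ Fcross r m b ↔ crossP r m a b := by
  rw [Fcross, crossP]
  split
  · rename_i hc
    simp only [Finset.mem_filter, Finset.mem_univ, true_and]
    tauto
  · rename_i hc
    simp only [Finset.notMem_empty, false_iff]
    tauto

lemma card_filter_val_zero (hs : 0 < r / 2) :
    (Finset.univ.filter (fun a : Fin (r / 2) => a.val = 0)).card = 1 := by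
  rw [Finset.card_eq_one]
  refine ⟨⟨0, hs⟩, ?_⟩
  ext a
  simp [Fin.ext_iff]

lemma card_Fcross (hr : 1 ≤ r) {b : ZMod m} :
    (Fcross r m b).card = if r % 2 = 0 ∧ m % 2 = 1 ∧ b = -1 then 1 else 0 := by
  rw [Fcross]
  split
  · rename_i hc
    exact card_filter_val_zero (by omega)
  · simp

lemma nbhd_inr (hr : 1 ≤ r) (hrm : r ≤ m) (b : ZMod m) :
    (consG r m).neighborSet (Sum.inr b) =
      ↑(((Fcirc ((r-1)/2) b ∪ Fmatch r b).image Sum.inr) ∪ ((Fcross r m b).image Sum.inl)) := by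
  have hk : 2 * ((r-1)/2) < m := by omega
  have hm2 : r % 2 = 0 → 2 ≤ m := by omega
  ext x
  simp only [SimpleGraph.mem_neighborSet, Finset.coe_union, Set.mem_union, Finset.coe_image,
    Set.mem_image, Finset.mem_coe]
  rcases x with a | c
  · constructor
    · rintro ⟨-, hadj⟩
      exact Or.inr ⟨a, mem_Fcross.mpr hadj, rfl⟩
    · rintro (⟨c, -, hc⟩ | ⟨a', ha', he⟩)
      · exact absurd hc (by simp)
      · obtain rfl : a' = a := Sum.inl_injective he
        exact ⟨by simp, mem_Fcross.mp ha'⟩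
  · constructor
    · rintro ⟨hne, hadj⟩
      rcases hadj with hc | ⟨hre, hma⟩
      · exact Or.inl ⟨c, Or.inl (mem_Fcirc.mpr hc), rfl⟩
      · exact Or.inl ⟨c, Or.inr ((mem_Fmatch hm2).mpr ⟨hre, hma⟩), rfl⟩
    · rintro (⟨c', hc', he⟩ | ⟨a', -, he⟩)
      · obtain rfl : c' = c := Sum.inr_injective he
        have hcb : c' ≠ b := by
          rintro rfl
          rcases hc' with h | h
          · exact not_mem_Fcirc hk c' h
          · exact not_mem_Fmatch c' h
        refine ⟨fun h => hcb (Sum.inr_injective h).symm, ?_⟩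
        rcases hc' with h | h
        · exact Or.inl (mem_Fcirc.mp h)
        · exact Or.inr ((mem_Fmatch hm2).mp h)
      · exact absurd he (by simp)

lemma deg_inr (hr : 1 ≤ r) (hrm : r ≤ m) (b : ZMod m) :
    natDeg (consG r m) (Sum.inr b) = r - 1 := by
  have hk : 2 * ((r-1)/2) < m := by omega
  have hdisj : Disjoint (Fcirc ((r-1)/2) b) (Fmatch r b) := by
    rcases Nat.eq_zero_or_pos (r % 2) with hre | hro
    · exact Fmatch_disj (by omega) hk b
    · have hr1 : r % 2 = 1 := by omega
      simp [Fmatch, hr1]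
  have hdisj2 : Disjoint ((Fcirc ((r-1)/2) b ∪ Fmatch r b).image Sum.inr)
      ((Fcross r m b).image Sum.inl) := by
    rw [Finset.disjoint_left]
    rintro x hx hx'
    simp only [Finset.mem_image] at hx hx'
    obtain ⟨c, -, rfl⟩ := hx
    obtain ⟨a, -, ha⟩ := hx'
    exact absurd ha (by simp)
  rw [natDeg, nbhd_inr hr hrm b, Set.ncard_coe_finset,
    Finset.card_union_of_disjoint hdisj2,
    Finset.card_image_of_injective _ Sum.inr_injective,
    Finset.card_image_of_injective _ Sum.inl_injective,
    Finset.card_union_of_disjoint hdisj,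
    card_Fcirc hk, card_Fmatch, card_Fcross hr]
  have hbv := ZMod.val_lt b
  have hneg1 := (zmod_neg_one_iff b)
  by_cases hre : r % 2 = 0
  · by_cases hbv2 : b.val < 2 * (m / 2)
    · rw [if_pos ⟨hre, hbv2⟩, if_neg]
      · omega
      · rintro ⟨-, hmo, hb1⟩
        rw [hneg1] at hb1
        omega
    · have hmo : m % 2 = 1 := by omega
      rw [if_neg (by tauto), if_pos ⟨hre, hmo, hneg1.mpr (by omega)⟩]
      omega
  · rw [if_neg (by tauto), if_neg (by tauto)]
    omega

lemma nbhd_inl (hr : 1 ≤ r) (hrm : r ≤ m) (a : Fin (r / 2)) :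
    (consG r m).neighborSet (Sum.inl a) =
      ↑(((Finset.univ.erase a).image Sum.inl) ∪
        (if r % 2 = 0 ∧ m % 2 = 1 ∧ a.val = 0 then {Sum.inr (-1 : ZMod m)} else ∅)) := by
  ext x
  simp only [SimpleGraph.mem_neighborSet, Finset.coe_union, Set.mem_union, Finset.coe_image,
    Set.mem_image, Finset.mem_coe]
  rcases x with b | c
  · constructor
    · rintro ⟨hne, -⟩
      refine Or.inl ⟨b, Finset.mem_erase.mpr ⟨fun h => hne (by rw [h]), Finset.mem_univ b⟩, rfl⟩
    · rintro (⟨b', hb', he⟩ | h)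
      · obtain rfl : b' = b := Sum.inl_injective he
        exact ⟨fun h => (Finset.mem_erase.mp hb').1 (Sum.inl_injective h).symm, trivial⟩
      · exfalso
        split at h <;> simp at h
  · constructor
    · rintro ⟨-, hadj⟩
      obtain ⟨h1, h2, h3, h4⟩ := hadj
      refine Or.inr ?_
      rw [if_pos ⟨h1, h2, h3⟩, h4]
      simp
    · rintro (⟨b', -, he⟩ | h)
      · exact absurd he (by simp)
      · split at h
        · rename_i hc
          simp only [Finset.mem_singleton] at h
          obtain rfl : c = -1 := Sum.inr_injective h
          exact ⟨by simp, hc.1, hc.2.1, hc.2.2, rfl⟩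
        · simp at h

lemma deg_inl (hr : 1 ≤ r) (hrm : r ≤ m) (a : Fin (r / 2)) :
    natDeg (consG r m) (Sum.inl a)
      = r / 2 - 1 + (if r % 2 = 0 ∧ m % 2 = 1 ∧ a.val = 0 then 1 else 0) := by
  have hdisj : Disjoint ((Finset.univ.erase a).image Sum.inl)
      (if r % 2 = 0 ∧ m % 2 = 1 ∧ a.val = 0 then {Sum.inr (-1 : ZMod m)} else ∅) := by
    rw [Finset.disjoint_left]
    rintro x hx hx'
    simp only [Finset.mem_image] at hx
    obtain ⟨b, -, rfl⟩ := hx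
    split at hx' <;> simp at hx'
  rw [natDeg, nbhd_inl hr hrm a, Set.ncard_coe_finset,
    Finset.card_union_of_disjoint hdisj,
    Finset.card_image_of_injective _ Sum.inl_injective,
    Finset.card_erase_of_mem (Finset.mem_univ a)]
  congr 1
  · simp
  · split <;> simp

lemma deg_sum (hr : 1 ≤ r) (hrm : r ≤ m) :
    ∑ x, natDeg (consG r m) x
      = (r/2) * (r/2 - 1) + m * (r - 1) + (if r % 2 = 0 ∧ m % 2 = 1 then 1 else 0) := by
  rw [Fintype.sum_sum_type]
  have h1 : ∑ b : ZMod m, natDeg (consG r m) (Sum.inr b) = m * (r - 1) := by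
    rw [Finset.sum_congr rfl (fun b _ => deg_inr hr hrm b)]
    simp [ZMod.card, mul_comm]
  have h2 : ∑ a : Fin (r/2), natDeg (consG r m) (Sum.inl a)
      = (r/2) * (r/2 - 1) + (if r % 2 = 0 ∧ m % 2 = 1 then 1 else 0) := by
    rw [Finset.sum_congr rfl (fun a _ => deg_inl hr hrm a)]
    rw [Finset.sum_add_distrib]
    congr 1
    · simp [mul_comm]
    · by_cases hc : r % 2 = 0 ∧ m % 2 = 1
      · rw [if_pos hc]
        have : ∀ a : Fin (r/2), (if r % 2 = 0 ∧ m % 2 = 1 ∧ a.val = 0 then 1 else 0)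
            = (if a.val = 0 then 1 else 0) := by
          intro a; by_cases h : a.val = 0 <;> simp [h, hc.1, hc.2]
        rw [Finset.sum_congr rfl (fun a _ => this a), Finset.sum_boole]
        rw [card_filter_val_zero (by omega)]
        simp
      · rw [if_neg hc]
        apply Finset.sum_eq_zero
        intro a _
        rw [if_neg (by tauto)]
  omega

end construction2

lemma natDeg_map {V W : Type*} (e : V ≃ W) (G : SimpleGraph V) (w : W) :
    natDeg (G.map e.toEmbedding) w = natDeg G (e.symm w) := by
  have hset : (G.map e.toEmbedding).neighborSet w = e '' (G.neighborSet (e.symm w)) := by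
    ext x
    simp only [SimpleGraph.mem_neighborSet, SimpleGraph.map_adj, Set.mem_image,
      Equiv.toEmbedding_apply]
    constructor
    · rintro ⟨a, b, hab, ha, rfl⟩
      refine ⟨b, ?_, rfl⟩
      have : a = e.symm w := by rw [← ha]; simp
      rwa [this] at hab
    · rintro ⟨y, hy, rfl⟩
      exact ⟨e.symm w, y, hy, by simp, rfl⟩
  rw [natDeg, hset, Set.ncard_image_of_injective _ e.injective, natDeg]

theorem construction_exists (n r : ℕ) (hr : 1 ≤ r) (hn : 3 * r ≤ 2 * n) :
    ∃ H : SimpleGraph (Fin n), StarSatIn r ⊤ H ∧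
      2 * edgeCount H = (r/2) * (r/2 - 1) + (n - r/2) * (r - 1)
        + (if r % 2 = 0 ∧ (n - r/2) % 2 = 1 then 1 else 0) := by
  set m := n - r/2 with hmdef
  have hrm : r ≤ m := by omega
  haveI : NeZero m := ⟨by omega⟩
  have hcard : Fintype.card (Fin (r/2) ⊕ ZMod m) = n := by
    simp [ZMod.card]
    omega
  set e := Fintype.equivFinOfCardEq hcard with he
  refine ⟨(consG r m).map e.toEmbedding, ⟨le_top, ?_, ?_⟩, ?_⟩
  · intro v
    rw [natDeg_map]
    rcases hsv : e.symm v with a | b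
    · rw [deg_inl hr hrm]
      split <;> omega
    · rw [deg_inr hr hrm]
      omega
  · intro u v huv hnadj
    have hune : u ≠ v := huv.ne
    rcases hu : e.symm u with a | b <;> rcases hv : e.symm v with a' | b'
    · exfalso
      apply hnadj
      have hne : (Sum.inl a : Fin (r/2) ⊕ ZMod m) ≠ Sum.inl a' := by
        rw [← hu, ← hv]
        simp [hune]
      have hadj : (consG r m).Adj (e.symm u) (e.symm v) := by
        rw [hu, hv]
        exact ⟨hne, trivial⟩
      have h2 : ((consG r m).map e.toEmbedding).Adj (e (e.symm u)) (e (e.symm v)) :=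
        SimpleGraph.map_adj_apply.mpr hadj
      simpa using h2
    · refine ⟨v, ?_⟩
      rw [natDeg_addEdge_snd _ hune hnadj, natDeg_map, hv, deg_inr hr hrm]
      omega
    · refine ⟨u, ?_⟩
      rw [natDeg_addEdge_fst _ hune hnadj, natDeg_map, hu, deg_inr hr hrm]
      omega
    · refine ⟨u, ?_⟩
      rw [natDeg_addEdge_fst _ hune hnadj, natDeg_map, hu, deg_inr hr hrm]
      omega
  · rw [← handshake]
    have h1 : ∀ v, natDeg ((consG r m).map e.toEmbedding) v = natDeg (consG r m) (e.symm v) :=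
      fun v => natDeg_map e _ v
    rw [Finset.sum_congr rfl (fun v _ => h1 v)]
    rw [Equiv.sum_comp e.symm (natDeg (consG r m))]
    exact deg_sum hr hrm


set_option linter.unusedSectionVars false in
theorem stmt1 (n r : ℕ) (hr : 1 ≤ r) (hn : 3 * r ≤ 2 * n) :
    (starSat r (⊤ : SimpleGraph (Fin n)) : ℤ)
      = ⌈((r : ℝ) - 1) * (n : ℝ) / 2 - (r : ℝ) ^ 2 / 8⌉ := by
  obtain ⟨H, hsat, hcount⟩ := construction_exists n r hr hn
  set M := edgeCount H with hM
  set s := r / 2 with hs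
  have hsn : s ≤ n := by omega
  set c : ℕ := (if r % 2 = 0 ∧ (n - s) % 2 = 1 then 1 else 0) with hc
  have hc01 : c = 0 ∨ c = 1 := by rw [hc]; split <;> simp
  have hZ : 2 * (M:ℤ) = (s:ℤ) * ((s:ℤ) - 1) + ((n:ℤ) - s) * ((r:ℤ) - 1) + c := by
    have hcast := congrArg (Nat.cast : ℕ → ℤ) hcount
    rcases Nat.eq_zero_or_pos s with h0 | h1
    · have hr1 : r = 1 := by omega
      have hc0 : c = 0 := by rw [hc, if_neg (by omega)]
      have hprod : (n - s) * (r - 1) = 0 := by rw [hr1]; simp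
      rw [hprod, h0, hc0] at hcount
      norm_num at hcount
      have hM0 : M = 0 := by omega
      rw [h0, hc0, hM0, hr1]
      norm_num
    · push_cast [Nat.cast_sub hsn, Nat.cast_sub hr, Nat.cast_sub h1] at hcast
      push_cast
      linarith
  have key : 4 * ((r:ℤ) - 1) * n - r^2 ≤ 8 * M ∧ 8 * (M:ℤ) < 4 * ((r:ℤ) - 1) * n - r^2 + 8 := by
    have hpar : r % 2 = 0 ∨ r % 2 = 1 := Nat.mod_two_eq_zero_or_one r
    rcases hpar with hpe | hpo
    · have hr2 : (r:ℤ) = 2 * s := by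
        have : r = 2 * s := by omega
        exact_mod_cast this
      rw [hr2] at hZ ⊢
      have hiden : 4 * (2*(s:ℤ) - 1) * n - (2*(s:ℤ))^2 = 8 * M - 4 * c := by
        linear_combination -4 * hZ
      have hcZ : (c:ℤ) = 0 ∨ (c:ℤ) = 1 := by rcases hc01 with h|h <;> simp [h]
      rcases hcZ with h|h <;> rw [h] at hiden <;> constructor <;> linarith
    · have hr2 : (r:ℤ) = 2 * s + 1 := by
        have : r = 2 * s + 1 := by omega
        exact_mod_cast this
      have hc0 : (c:ℤ) = 0 := by
        rw [hc]
        rw [if_neg (by omega : ¬ (r % 2 = 0 ∧ (n - s) % 2 = 1))]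
        simp
      rw [hr2] at hZ ⊢
      rw [hc0] at hZ
      have hiden : 4 * (2*(s:ℤ) + 1 - 1) * n - (2*(s:ℤ)+1)^2 = 8 * M - 1 := by
        linear_combination -4 * hZ
      constructor <;> linarith
  have hceil : (M:ℤ) = ⌈((r : ℝ) - 1) * (n : ℝ) / 2 - (r : ℝ) ^ 2 / 8⌉ := by
    rw [eq_comm, Int.ceil_eq_iff]
    have k2 : (8:ℝ) * M < 4 * ((r:ℝ) - 1) * n - r^2 + 8 := by exact_mod_cast key.2
    have k1 : 4 * ((r:ℝ) - 1) * n - (r:ℝ)^2 ≤ 8 * M := by exact_mod_cast key.1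
    constructor
    · push_cast
      linarith
    · push_cast
      linarith
  have hmem : M ∈ {x | ∃ H' : SimpleGraph (Fin n), StarSatIn r ⊤ H' ∧ edgeCount H' = x} :=
    ⟨H, hsat, rfl⟩
  have hle : starSat r (⊤ : SimpleGraph (Fin n)) ≤ M := Nat.sInf_le hmem
  have hge : M ≤ starSat r (⊤ : SimpleGraph (Fin n)) := by
    apply le_csInf ⟨M, hmem⟩
    rintro x ⟨H', hH', rfl⟩
    have hlb := lowerBound hr H' hH'
    have := key.2
    have hMx : (M:ℤ) < (edgeCount H' : ℤ) + 1 := by linarith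
    exact_mod_cast (by omega : (M:ℤ) ≤ (edgeCount H' : ℤ))
  have heq : starSat r (⊤ : SimpleGraph (Fin n)) = M := le_antisymm hle hge
  rw [heq]
  exact hceil
end

section
/- Fix 0 < p < 1, r ≥ 3, μ ≥ 0, and ε > 0. Let b = 1/(1-p), x₀ = ⌊2 log_b n − 2 log_b log_b n + 2 log_b(e/2) + 1 + ε⌋, and x₁ = x₀ + 1. Then the expected number of vertex subsets of G(n,p) of size x₁ inducing fewer than μ + (r-1)/2 edges, namely C(n, x₁) · Σ_{m < μ + (r-1)/2} C(C(x₁,2), m) p^m (1-p)^(C(x₁,2)-m), tends to 0 as n → ∞. -/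
open Filter Real
open scoped Classical

lemma logb_le_of (b x s : ℝ) (hlb : 0 < Real.log b) (h : Real.log x ≤ s * Real.log b) :
    Real.logb b x ≤ s := by
  rw [Real.logb, div_le_iff₀ hlb]; linarith

set_option maxHeartbeats 1000000 in
lemma key (p ε : ℝ) (hp : 0 < p) (hp1 : p < 1) (hε : 0 < ε) (M : ℕ) (X : ℕ → ℕ)
    (hX : ∀ n : ℕ, X n = (⌊2 * Real.logb (1/(1-p)) n
        - 2 * Real.logb (1/(1-p)) (Real.logb (1/(1-p)) n)
        + 2 * Real.logb (1/(1-p)) (Real.exp 1 / 2) + 1 + ε⌋).toNat + 1) :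
    Tendsto (fun n : ℕ => (n.choose (X n) : ℝ) * ∑ m ∈ Finset.range M,
      (((X n).choose 2).choose m : ℝ) * p ^ m * (1-p) ^ ((X n).choose 2 - m))
      atTop (nhds 0) := by
  have hq : (0:ℝ) < 1 - p := by linarith
  have hq1 : (1:ℝ) - p < 1 := by linarith
  set b : ℝ := 1 / (1 - p) with hbdef
  have hb : 1 < b := one_lt_one_div hq hq1
  have hb0 : 0 < b := one_pos.trans hb
  have hlb : 0 < Real.log b := Real.log_pos hb
  have hqb : (1:ℝ) - p = b⁻¹ := by rw [hbdef, one_div, inv_inv]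
  set c : ℝ := Real.logb b (Real.exp 1 / 2) with hcdef
  have hc : 0 < c := Real.logb_pos hb (by nlinarith [Real.exp_one_gt_d9])
  set δ : ℝ := b ^ (-(ε/4)) with hδdef
  have hδ0 : 0 < δ := Real.rpow_pos_of_pos hb0 _
  have hδ1 : δ < 1 := Real.rpow_lt_one_of_one_lt_of_neg hb (by linarith)
  set β : ℝ := b ^ (ε/4) with hβdef
  have hβ : 1 < β := (Real.one_lt_rpow_iff_of_pos hb0).2 (Or.inl ⟨hb, by linarith⟩)
  have hβ0 : 0 < β := one_pos.trans hβ
  set K : ℝ := (M:ℝ) * b^M with hKdef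
  have hLtop : Tendsto (fun n : ℕ => Real.logb b n) atTop atTop :=
    (Real.tendsto_logb_atTop hb).comp tendsto_natCast_atTop_atTop
  -- two log-smallness facts
  have hlog1 : ∀ᶠ t : ℝ in atTop, Real.logb b t ≤ t / 2 := by
    filter_upwards [Real.isLittleO_log_id_atTop.def (by positivity :
        (0:ℝ) < Real.log b / 2), eventually_ge_atTop (1:ℝ)] with t ht h1
    refine logb_le_of _ _ _ hlb ?_
    have : |Real.log t| ≤ Real.log b / 2 * |t| := by simpa [Real.norm_eq_abs] using ht
    rw [abs_of_nonneg (by linarith : (0:ℝ) ≤ t)] at this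
    calc Real.log t ≤ |Real.log t| := le_abs_self _
      _ ≤ Real.log b / 2 * t := this
      _ = t / 2 * Real.log b := by ring
  have hlog2 : ∀ᶠ t : ℝ in atTop, Real.logb b t ≤ (β - 1)/β * t := by
    filter_upwards [Real.isLittleO_log_id_atTop.def
        (mul_pos (div_pos (by linarith : (0:ℝ) < β - 1) hβ0) hlb), eventually_ge_atTop (1:ℝ)] with t ht h1
    refine logb_le_of _ _ _ hlb ?_
    have : |Real.log t| ≤ (β - 1)/β * Real.log b * |t| := by simpa [Real.norm_eq_abs] using ht
    rw [abs_of_nonneg (by linarith : (0:ℝ) ≤ t)] at this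
    calc Real.log t ≤ |Real.log t| := le_abs_self _
      _ ≤ (β - 1)/β * Real.log b * t := this
      _ = (β - 1)/β * t * Real.log b := by ring
  -- the main eventual bound
  have hev : ∀ᶠ n : ℕ in atTop,
      ((n.choose (X n) : ℝ) * ∑ m ∈ Finset.range M,
        (((X n).choose 2).choose m : ℝ) * p ^ m * (1-p) ^ ((X n).choose 2 - m)
        ≤ K * (X n : ℝ)^(2*M) * δ ^ (X n)) ∧ Real.logb b n ≤ (X n : ℝ) := by
    filter_upwards [hLtop.eventually hlog1, hLtop.eventually hlog2,
      hLtop.eventually (eventually_ge_atTop ((M:ℝ) + 2)),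
      hLtop.eventually (eventually_ge_atTop (1:ℝ)),
      eventually_ge_atTop 1] with n h1 h2 hLM hL1 hn1
    have hXn := hX n
    have hn0 : (0:ℝ) < (n:ℕ) := by exact_mod_cast hn1
    set Ln : ℝ := Real.logb b (n:ℕ) with hLndef
    set yn : ℝ := 2*Ln - 2*Real.logb b Ln + 2*c + 1 + ε with hyndef
    set t : ℕ := (⌊yn⌋).toNat with htdef
    have hLn0 : 0 < Ln := lt_of_lt_of_le one_pos hL1
    have hyn2 : Ln + 1 + ε ≤ yn := by rw [hyndef]; linarith
    have hy0 : (0:ℝ) ≤ yn := by linarith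
    have ht : yn - 1 ≤ (t:ℝ) := by
      rw [htdef, Int.floor_toNat]
      exact (Nat.sub_one_lt_floor yn).le
    have hXR : yn ≤ (X n : ℝ) := by rw [hXn]; push_cast; linarith
    have hLX : Ln ≤ (X n : ℝ) := by linarith
    refine ⟨?_, hLX⟩
    have hX0 : (0:ℝ) < (X n : ℝ) := by rw [hXn]; positivity
    have hE : (0:ℝ) < Real.exp 1 := Real.exp_pos 1
    -- M ≤ choose 2
    have hC : M ≤ (X n).choose 2 := by
      have hXM : M + 2 ≤ X n := by
        have h' : ((M:ℝ) + 2) ≤ (X n : ℝ) := by linarith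
        exact_mod_cast h'
      calc M ≤ (M+2).choose 2 := by
              rw [Nat.choose_two_right]
              rw [show M + 2 - 1 = M + 1 from rfl]
              rw [Nat.le_div_iff_mul_le (by norm_num)]
              nlinarith
        _ ≤ (X n).choose 2 := Nat.choose_le_choose 2 hXM
    -- sum bound
    have hsum : ∑ m ∈ Finset.range M, (((X n).choose 2).choose m : ℝ) * p ^ m * (1-p) ^ ((X n).choose 2 - m)
        ≤ (M:ℝ) * ((X n:ℝ)^(2*M) * b^M * (1-p)^((X n).choose 2)) := by
      have hbd : ∀ m ∈ Finset.range M, (((X n).choose 2).choose m : ℝ) * p ^ m * (1-p) ^ ((X n).choose 2 - m)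
          ≤ (X n:ℝ)^(2*M) * b^M * (1-p)^((X n).choose 2) := by
        intro m hm
        have hmM : m < M := Finset.mem_range.1 hm
        have hmC : m ≤ (X n).choose 2 := le_trans hmM.le hC
        have e1 : (((X n).choose 2).choose m : ℝ) ≤ ((X n:ℝ)^2)^m := by
          calc (((X n).choose 2).choose m : ℝ) ≤ (((X n).choose 2 : ℕ):ℝ)^m := by
                exact_mod_cast Nat.choose_le_pow ((X n).choose 2) m
            _ ≤ ((X n:ℝ)^2)^m := by
                apply pow_le_pow_left₀ (by positivity)
                exact_mod_cast Nat.choose_le_pow (X n) 2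
        have e2 : ((X n:ℝ)^2)^m ≤ ((X n:ℝ)^2)^M := by
          apply pow_le_pow_right₀ ?_ hmM.le
          have : (1:ℝ) ≤ (X n:ℝ) := by
            rw [hXn]; push_cast; linarith [Nat.cast_nonneg (α := ℝ) t]
          nlinarith
        have e3 : p ^ m ≤ 1 := pow_le_one₀ hp.le hp1.le
        have e4 : (1-p)^((X n).choose 2 - m) ≤ b^M * (1-p)^((X n).choose 2) := by
          have hib : ((1:ℝ)-p)⁻¹ = b := by rw [hqb, inv_inv]
          rw [pow_sub₀ _ (ne_of_gt hq) hmC, ← inv_pow, hib, mul_comm]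
          have : b ^ m ≤ b ^ M := pow_le_pow_right₀ hb.le hmM.le
          have h0 : (0:ℝ) ≤ (1-p)^((X n).choose 2) := by positivity
          nlinarith
        calc (((X n).choose 2).choose m : ℝ) * p ^ m * (1-p) ^ ((X n).choose 2 - m)
            ≤ ((X n:ℝ)^2)^m * 1 * (b^M * (1-p)^((X n).choose 2)) := by
              apply mul_le_mul (mul_le_mul e1 e3 (by positivity) (by positivity)) e4
                (by positivity) (by positivity)
          _ ≤ ((X n:ℝ)^2)^M * 1 * (b^M * (1-p)^((X n).choose 2)) := by
              apply mul_le_mul_of_nonneg_right (mul_le_mul_of_nonneg_right e2 (by norm_num))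
              positivity
          _ = (X n:ℝ)^(2*M) * b^M * (1-p)^((X n).choose 2) := by
              rw [← pow_mul]; ring
      calc ∑ m ∈ Finset.range M, (((X n).choose 2).choose m : ℝ) * p ^ m * (1-p) ^ ((X n).choose 2 - m)
          ≤ (Finset.range M).card • ((X n:ℝ)^(2*M) * b^M * (1-p)^((X n).choose 2)) :=
            Finset.sum_le_card_nsmul _ _ _ hbd
        _ = (M:ℝ) * ((X n:ℝ)^(2*M) * b^M * (1-p)^((X n).choose 2)) := by
            rw [Finset.card_range, nsmul_eq_mul]
    -- binomial coefficient bound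
    have hchoose : (n.choose (X n) : ℝ) ≤ ((n:ℝ) * Real.exp 1 / (X n:ℝ))^(X n) := by
      calc (n.choose (X n):ℝ) ≤ (n:ℝ)^(X n) / (Nat.factorial (X n) : ℝ) :=
            Nat.choose_le_pow_div (X n) n
        _ = ((n:ℝ)/(X n:ℝ))^(X n) * ((X n:ℝ)^(X n) / (Nat.factorial (X n) : ℝ)) := by
            have hXnz : ((X n:ℝ)) ≠ 0 := ne_of_gt hX0
            have hfz : ((Nat.factorial (X n)):ℝ) ≠ 0 := by positivity
            rw [div_pow]
            field_simp
        _ ≤ ((n:ℝ)/(X n:ℝ))^(X n) * Real.exp 1 ^ (X n) := by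
            apply mul_le_mul_of_nonneg_left _ (by positivity)
            rw [Real.exp_one_pow]
            exact Real.pow_div_factorial_le_exp _ (Nat.cast_nonneg _) _
        _ = ((n:ℝ) * Real.exp 1 / (X n:ℝ))^(X n) := by
            rw [← mul_pow, div_mul_eq_mul_div]
    -- rpow link
    have hBpow : ((n:ℝ) * Real.exp 1 / (X n:ℝ)) ^ (X n) * (1-p)^((X n).choose 2)
        = (((n:ℝ) * Real.exp 1 / (X n:ℝ)) * (1-p) ^ ((t:ℝ)/2)) ^ (X n) := by
      rw [mul_pow]
      congr 1
      rw [← Real.rpow_natCast ((1-p) ^ ((t:ℝ)/2)) (X n), ← Real.rpow_mul hq.le,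
        ← Real.rpow_natCast (1-p) ((X n).choose 2)]
      congr 1
      rw [Nat.cast_choose_two, hXn]
      push_cast
      ring
    -- the key bound B ≤ δ
    have hq2 : (1-p) ^ ((t:ℝ)/2) ≤ (1-p) ^ ((yn - 1)/2) :=
      Real.rpow_le_rpow_of_exponent_ge hq hq1.le (by linarith)
    have hqy : (1-p) ^ ((yn - 1)/2) = 2 * Ln / ((n:ℝ) * Real.exp 1) * b ^ (-(ε/2)) := by
      have h1' : (yn - 1)/2 = Ln - Real.logb b Ln + c + ε/2 := by rw [hyndef]; ring
      have e1 : b ^ (Ln : ℝ) = (n:ℝ) := by rw [hLndef]; exact Real.rpow_logb hb0 hb.ne' hn0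
      have e2 : b ^ (Real.logb b Ln) = Ln := Real.rpow_logb hb0 hb.ne' hLn0
      have e3 : b ^ (c:ℝ) = Real.exp 1 / 2 := by
        rw [hcdef]; exact Real.rpow_logb hb0 hb.ne' (by positivity)
      rw [h1', hqb, Real.inv_rpow hb0.le, ← Real.rpow_neg hb0.le,
        show -(Ln - Real.logb b Ln + c + ε/2) = (-Ln) + (Real.logb b Ln) + (-c) + (-(ε/2)) by ring,
        Real.rpow_add hb0, Real.rpow_add hb0, Real.rpow_add hb0,
        Real.rpow_neg hb0.le Ln, Real.rpow_neg hb0.le c, e1, e2, e3]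
      congr 1
      rw [inv_div]
      field_simp
    have hβlog : β * Real.logb b Ln ≤ (β-1) * Ln := by
      have h' := mul_le_mul_of_nonneg_left h2 hβ0.le
      calc β * Real.logb b Ln ≤ β * ((β - 1)/β * Ln) := h'
        _ = (β-1) * Ln := by field_simp
    have h2L : 2 * Ln ≤ β * (X n:ℝ) := by
      rw [hyndef] at hXR
      nlinarith [mul_le_mul_of_nonneg_left hXR hβ0.le,
        mul_nonneg hβ0.le (show (0:ℝ) ≤ 2*c + 1 + ε by linarith)]
    have hB0 : (0:ℝ) ≤ ((n:ℝ) * Real.exp 1 / (X n:ℝ)) * (1-p) ^ ((t:ℝ)/2) := by positivity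
    have hBδ : ((n:ℝ) * Real.exp 1 / (X n:ℝ)) * (1-p) ^ ((t:ℝ)/2) ≤ δ := by
      calc ((n:ℝ) * Real.exp 1 / (X n:ℝ)) * (1-p) ^ ((t:ℝ)/2)
          ≤ ((n:ℝ) * Real.exp 1 / (X n:ℝ)) * (2 * Ln / ((n:ℝ) * Real.exp 1) * b ^ (-(ε/2))) := by
            apply mul_le_mul_of_nonneg_left (le_of_le_of_eq hq2 hqy) (by positivity)
        _ = (2 * Ln / (X n:ℝ)) * b ^ (-(ε/2)) := by
            rw [← mul_assoc]
            congr 1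
            field_simp
        _ ≤ β * b ^ (-(ε/2)) := by
            apply mul_le_mul_of_nonneg_right _ (by positivity)
            rw [div_le_iff₀ hX0]
            linarith
        _ = δ := by
            rw [hβdef, hδdef, ← Real.rpow_add hb0]
            congr 1
            ring
    -- assemble
    calc (n.choose (X n) : ℝ) * ∑ m ∈ Finset.range M,
          (((X n).choose 2).choose m : ℝ) * p ^ m * (1-p) ^ ((X n).choose 2 - m)
        ≤ ((n:ℝ) * Real.exp 1 / (X n:ℝ))^(X n) *
            ((M:ℝ) * ((X n:ℝ)^(2*M) * b^M * (1-p)^((X n).choose 2))) := by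
          apply mul_le_mul hchoose hsum
            (Finset.sum_nonneg fun m _ => by positivity) (by positivity)
      _ = K * (X n:ℝ)^(2*M) * (((n:ℝ) * Real.exp 1 / (X n:ℝ))^(X n) * (1-p)^((X n).choose 2)) := by
          rw [hKdef]; ring
      _ = K * (X n:ℝ)^(2*M) * (((n:ℝ) * Real.exp 1 / (X n:ℝ)) * (1-p) ^ ((t:ℝ)/2)) ^ (X n) := by
          rw [hBpow]
      _ ≤ K * (X n:ℝ)^(2*M) * δ ^ (X n) := by
          apply mul_le_mul_of_nonneg_left (pow_le_pow_left₀ hB0 hBδ _)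
          rw [hKdef]; positivity
  -- conclude
  have hXtop : Tendsto X atTop atTop := by
    rw [← tendsto_natCast_atTop_iff (R := ℝ)]
    exact tendsto_atTop_mono' atTop (hev.mono fun n h => h.2) hLtop
  have hgeom : Tendsto (fun j : ℕ => (j:ℝ)^(2*M) * δ ^ j) atTop (nhds 0) :=
    (summable_pow_mul_geometric_of_norm_lt_one (R := ℝ) (2*M)
      (by rw [Real.norm_eq_abs, abs_of_nonneg hδ0.le]; exact hδ1)).tendsto_atTop_zero
  have hg : Tendsto (fun n : ℕ => K * (X n : ℝ)^(2*M) * δ ^ (X n)) atTop (nhds 0) := by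
    have := (hgeom.comp hXtop).const_mul K
    simpa [mul_assoc] using this
  refine squeeze_zero' ?_ (hev.mono fun n h => h.1) hg
  filter_upwards with n
  refine mul_nonneg (by positivity) (Finset.sum_nonneg fun m _ => by positivity)

theorem stmt6 (p : ℝ) (hp : 0 < p) (hp1 : p < 1) (r μ : ℕ) (hr : 3 ≤ r)
    (ε : ℝ) (hε : 0 < ε) :
    Tendsto (fun n : ℕ =>
        (n.choose (x0 p ε n + 1) : ℝ) *
          ∑ m ∈ (Finset.range (μ + r)).filter
              (fun m : ℕ => (m : ℝ) < (μ : ℝ) + ((r : ℝ) - 1) / 2),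
            (((x0 p ε n + 1).choose 2).choose m : ℝ) * p ^ m *
              (1 - p) ^ ((x0 p ε n + 1).choose 2 - m))
      atTop (nhds 0) := by
  have hq : (0:ℝ) ≤ 1 - p := by linarith
  have hterm : ∀ n m : ℕ, (0:ℝ) ≤
      (((x0 p ε n + 1).choose 2).choose m : ℝ) * p ^ m *
        (1 - p) ^ ((x0 p ε n + 1).choose 2 - m) :=
    fun n m => mul_nonneg (mul_nonneg (Nat.cast_nonneg _) (pow_nonneg hp.le _))
      (pow_nonneg hq _)
  have hkey := key p ε hp hp1 hε (μ + r) (fun n => x0 p ε n + 1) (fun n => rfl)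
  refine squeeze_zero' ?_ ?_ hkey
  · filter_upwards with n
    exact mul_nonneg (Nat.cast_nonneg _) (Finset.sum_nonneg fun m _ => hterm n m)
  · filter_upwards with n
    apply mul_le_mul_of_nonneg_left _ (Nat.cast_nonneg _)
    exact Finset.sum_le_sum_of_subset_of_nonneg (Finset.filter_subset _ _)
      (fun m _ _ => hterm n m)
end

section
/- Fix 0 < p < 1, r ≥ 3, μ ≥ 0, and ε > 0. Let b = 1/(1-p), x₀ = ⌊2 log_b n − 2 log_b log_b n + 2 log_b(e/2) + 1 + ε⌋. Then the expected number of vertex subsets S of G(n,p) with |S| ≥ x₀ + 1 such that the number of edges induced by S is less than μ + (r-1)(|S| − x₀)/2 tends to 0 as n → ∞. -/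
set_option maxHeartbeats 1000000


open Filter Real
open scoped Classical

lemma my_choose_le (n k : ℕ) (hk : 0 < k) :
    (n.choose k : ℝ) ≤ (Real.exp 1 * n / k) ^ k := by
  have hkf : (0:ℝ) < (k.factorial : ℝ) := by positivity
  have hkR : (0:ℝ) < (k:ℝ) := by exact_mod_cast hk
  have h1 : (k.factorial : ℝ) * (n.choose k : ℝ) ≤ (n:ℝ)^k := by
    rw [← Nat.cast_mul, ← Nat.descFactorial_eq_factorial_mul_choose]
    exact_mod_cast Nat.descFactorial_le_pow n k
  have h2 : (k:ℝ)^k ≤ (k.factorial : ℝ) * Real.exp k := by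
    have hs := Real.sum_le_exp_of_nonneg (x := (k:ℝ)) (by positivity) (k+1)
    have hterm : (k:ℝ)^k / k.factorial ≤ ∑ i ∈ Finset.range (k+1), (k:ℝ) ^ i / i.factorial := by
      refine Finset.single_le_sum (f := fun i => (k:ℝ)^i / i.factorial) ?_ (Finset.self_mem_range_succ k)
      intro i _; positivity
    have := hterm.trans hs
    rw [div_le_iff₀ hkf] at this
    linarith [this]
  have heq : (Real.exp 1 * n / k) ^ k = Real.exp k * (n:ℝ)^k / (k:ℝ)^k := by
    rw [div_pow, mul_pow]
    congr 2
    rw [← Real.exp_nat_mul, mul_one]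
  rw [heq, le_div_iff₀ (by positivity : (0:ℝ) < (k:ℝ)^k)]
  have hc : (0:ℝ) ≤ (n.choose k : ℝ) := by positivity
  have he : (0:ℝ) < Real.exp k := Real.exp_pos _
  nlinarith [mul_le_mul_of_nonneg_right h1 he.le, mul_le_mul_of_nonneg_left h2 hc]

lemma my_ev_log_real (α β γ : ℝ) (hγ : 0 < γ) :
    ∀ᶠ x : ℝ in atTop, α * Real.log x + β ≤ γ * x := by
  have hc : (0:ℝ) < γ/(2*(|α|+1)) := by positivity
  have h := Real.isLittleO_log_id_atTop.def hc
  filter_upwards [h, eventually_ge_atTop (1:ℝ), eventually_ge_atTop (2*β/γ)] with x hx h1 hb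
  simp only [Real.norm_eq_abs, id] at hx
  have hlx : |Real.log x| = Real.log x := abs_of_nonneg (Real.log_nonneg h1)
  have hxx : |x| = x := abs_of_nonneg (by linarith)
  rw [hlx, hxx] at hx
  have ha : α * Real.log x ≤ |α| * Real.log x :=
    mul_le_mul_of_nonneg_right (le_abs_self α) (Real.log_nonneg h1)
  have hb2 : β ≤ γ * x / 2 := by
    rw [div_le_iff₀ hγ] at hb; linarith
  have h3 : |α| * Real.log x ≤ |α| * (γ/(2*(|α|+1)) * x) :=
    mul_le_mul_of_nonneg_left hx (abs_nonneg α)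
  have h4 : |α| * (γ/(2*(|α|+1)) * x) ≤ γ * x / 2 := by
    rw [div_mul_eq_mul_div, mul_div_assoc']
    rw [div_le_div_iff₀ (by positivity) (by norm_num)]
    have hxpos : (0:ℝ) ≤ x := by linarith
    nlinarith [abs_nonneg α, mul_nonneg (mul_nonneg (abs_nonneg α) hγ.le) hxpos]
  linarith

lemma my_ev_log (α β γ : ℝ) (hγ : 0 < γ) :
    ∀ᶠ k : ℕ in atTop, α * Real.log k + β ≤ γ * k :=
  tendsto_natCast_atTop_atTop.eventually (my_ev_log_real α β γ hγ)


lemma main_ineq (p ε lb rr mm : ℝ) (hp : 0 < p) (hp1 : p < 1)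
    (hlb : 0 < lb) (hε : 0 < ε) (hrr : 3 ≤ rr) (hmm : 0 ≤ mm)
    (x kk Ln lnn : ℝ)
    (hx0 : 0 ≤ x) (hk : x + 1 ≤ kk) (hk3 : 3 ≤ kk)
    (f1 : 2*lnn - 2*Real.log Ln + 2 - 2*Real.log 2 + ε*lb ≤ x * lb)
    (f2 : Real.log 2 + Real.log Ln - Real.log kk ≤ ε*lb/4)
    (f3 : 2*(rr-1) * Real.log kk + (rr-1)*Real.log (p/(1-p)+1) ≤ lb/2 * kk)
    (f4 : (2*mm+rr) * Real.log kk +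
        ((mm+(rr-1)/2)*Real.log (p/(1-p)+1) + Real.log (mm+rr+1)) ≤ ε*lb/8 * kk) :
    kk * (1 + lnn - Real.log kk) - (kk*(kk-1)/2) * lb
      + Real.log (mm + (rr-1)*(kk-x)/2 + 1)
      + (mm + (rr-1)*(kk-x)/2) * Real.log (kk*(kk-1)/2 * p / (1-p) + 1)
      ≤ -(ε*lb/8) * kk := by
  have hq : 0 < 1 - p := by linarith
  have hpq : 0 ≤ p/(1-p) := by positivity
  have hlk0 : 0 ≤ Real.log kk := Real.log_nonneg (by linarith)
  have hCp1 : (1:ℝ) ≤ p/(1-p)+1 := by linarith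
  have hlogCp : 0 ≤ Real.log (p/(1-p)+1) := Real.log_nonneg hCp1
  obtain ⟨X, hXdef⟩ : ∃ X:ℝ, X = 2*Real.log kk + Real.log (p/(1-p)+1) := ⟨_, rfl⟩
  obtain ⟨tR, htRdef⟩ : ∃ tR:ℝ, tR = mm + (rr-1)*(kk-x)/2 := ⟨_, rfl⟩
  obtain ⟨A, hAdef⟩ : ∃ A:ℝ, A = kk*(kk-1)/2 * p / (1-p) + 1 := ⟨_, rfl⟩
  rw [← htRdef, ← hAdef]
  have hX0 : 0 ≤ X := by rw [hXdef]; linarith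
  have htR0 : 0 ≤ tR := by rw [htRdef]; nlinarith
  have hKR0 : 0 ≤ kk*(kk-1)/2 := by nlinarith
  have hApos : 0 < A := by
    have : 0 ≤ kk*(kk-1)/2 * p / (1-p) := by positivity
    rw [hAdef]; linarith
  have hAle : A ≤ kk^2 * (p/(1-p)+1) := by
    have h1 : kk*(kk-1)/2 ≤ kk^2 := by nlinarith
    have h2 : kk*(kk-1)/2 * p / (1-p) ≤ kk^2 * (p/(1-p)) := by
      have e1 : kk*(kk-1)/2 * p / (1-p) = (kk*(kk-1)/2) * (p/(1-p)) := by ring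
      rw [e1]
      exact mul_le_mul_of_nonneg_right h1 hpq
    have h3 : (1:ℝ) ≤ kk^2 := by nlinarith
    rw [hAdef]; linarith
  have hlogA : Real.log A ≤ X := by
    have hkk2 : (0:ℝ) < kk^2 := by nlinarith
    calc Real.log A ≤ Real.log (kk^2 * (p/(1-p)+1)) :=
          Real.log_le_log hApos hAle
      _ = 2*Real.log kk + Real.log (p/(1-p)+1) := by
          rw [Real.log_mul (ne_of_gt hkk2) (by linarith : p/(1-p)+1 ≠ 0)]
          rw [Real.log_pow]; push_cast; ring
      _ = X := hXdef.symm
  have g1 : tR * Real.log A ≤ tR * X := mul_le_mul_of_nonneg_left hlogA htR0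
  have g2 : tR * X ≤ mm*X + (rr-1)*((kk-x)-1)*X + (rr-1)*X/2 := by
    rw [htRdef]
    nlinarith [mul_nonneg (mul_nonneg (by linarith : (0:ℝ) ≤ rr-1) hX0)
      (by linarith : (0:ℝ) ≤ (kk-x)-1)]
  have f3' : (rr-1)*X ≤ lb/2*kk := by
    have e : (rr-1)*X = 2*(rr-1)*Real.log kk + (rr-1)*Real.log (p/(1-p)+1) := by
      rw [hXdef]; ring
    linarith [f3]
  have g3 : (rr-1)*((kk-x)-1)*X ≤ ((kk-x)-1)*(lb/2*kk) := by
    have h := mul_le_mul_of_nonneg_left f3' (by linarith : (0:ℝ) ≤ (kk-x)-1)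
    nlinarith [h]
  have ht : Real.log (tR + 1) ≤ Real.log (mm+rr+1) + Real.log kk := by
    have h1 : tR + 1 ≤ (mm+rr+1)*kk := by
      rw [htRdef]
      nlinarith [mul_nonneg hmm (by linarith : (0:ℝ) ≤ kk - 1),
        mul_le_mul_of_nonneg_left (show kk-x ≤ kk by linarith)
          (show (0:ℝ) ≤ (rr-1)/2 by linarith)]
    calc Real.log (tR+1) ≤ Real.log ((mm+rr+1)*kk) :=
          Real.log_le_log (by linarith) h1
      _ = Real.log (mm+rr+1) + Real.log kk :=
          Real.log_mul (by linarith : mm+rr+1 ≠ 0) (by linarith : kk ≠ 0)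
  have g4 : mm*X + (rr-1)*X/2 + Real.log (mm+rr+1) + Real.log kk ≤ ε*lb/8*kk := by
    have e : mm*X + (rr-1)*X/2 = (2*mm+rr-1)*Real.log kk
        + (mm+(rr-1)/2)*Real.log (p/(1-p)+1) := by rw [hXdef]; ring
    linarith [f4]
  have g5 : kk*(1+lnn-Real.log kk) - (kk*(kk-1)/2)*lb
      ≤ -(ε*lb/4)*kk - (kk/2)*((kk-x)-1)*lb := by
    have m1 := mul_le_mul_of_nonneg_left f1 (show (0:ℝ) ≤ kk/2 by linarith)
    have m2 := mul_le_mul_of_nonneg_left f2 (show (0:ℝ) ≤ kk by linarith)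
    nlinarith [m1, m2]
  linarith [g1, g2, g3, g4, g5, ht]

lemma term_bound (p : ℝ) (hp : 0 < p) (hp1 : p < 1) (r μ : ℕ)
    (n k X0 : ℕ) (lb c : ℝ) (hlb : 0 < lb)
    (hlq : Real.log (1 - p) = -lb)
    (hk1 : X0 + 1 ≤ k) (hk2 : k ≤ n) (hk3 : 3 ≤ k)
    (hmain : (k:ℝ) * (1 + Real.log n - Real.log k)
        - ((k:ℝ)*((k:ℝ)-1)/2) * lb
        + Real.log ((μ:ℝ) + ((r:ℝ)-1)*((k:ℝ)-(X0:ℝ))/2 + 1)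
        + ((μ:ℝ) + ((r:ℝ)-1)*((k:ℝ)-(X0:ℝ))/2) *
            Real.log ((k:ℝ)*((k:ℝ)-1)/2 * p / (1-p) + 1)
        ≤ -c * k)
    (hr : 3 ≤ r) :
    (n.choose k : ℝ) * ∑ m ∈ (Finset.range (k.choose 2 + 1)).filter
        (fun m : ℕ => (m : ℝ) < (μ : ℝ) + ((r : ℝ) - 1) * ((k : ℝ) - (X0 : ℝ)) / 2),
        ((k.choose 2).choose m : ℝ) * p ^ m * (1 - p) ^ (k.choose 2 - m)
      ≤ Real.exp (-c * k) := by
  have hq : 0 < 1 - p := by linarith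
  have hkR : (3:ℝ) ≤ (k:ℝ) := by exact_mod_cast hk3
  have hkpos : (0:ℝ) < (k:ℝ) := by linarith
  have hkX : (X0:ℝ) + 1 ≤ (k:ℝ) := by exact_mod_cast hk1
  have hX00 : (0:ℝ) ≤ (X0:ℝ) := Nat.cast_nonneg _
  set KR : ℝ := (k:ℝ)*((k:ℝ)-1)/2 with hKRdef
  have hKcast : ((k.choose 2 : ℕ) : ℝ) = KR := Nat.cast_choose_two ℝ k
  have hKR0 : 0 ≤ KR := by rw [hKRdef]; nlinarith
  set tR : ℝ := (μ:ℝ) + ((r:ℝ)-1)*((k:ℝ)-(X0:ℝ))/2 with htRdef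
  have hrR : (3:ℝ) ≤ (r:ℝ) := by exact_mod_cast hr
  have htR0 : 0 ≤ tR := by
    have : (0:ℝ) ≤ (μ:ℝ) := Nat.cast_nonneg _
    rw [htRdef]; nlinarith
  set A : ℝ := KR * p / (1-p) + 1 with hAdef
  have hA1 : 1 ≤ A := by
    have : 0 ≤ KR * p / (1-p) := by positivity
    rw [hAdef]; linarith
  have hApos : 0 < A := by linarith
  set B : ℝ := A ^ tR * (1-p) ^ (k.choose 2) with hBdef
  have hB0 : 0 ≤ B := by positivity
  have inner_le : ∑ m ∈ (Finset.range (k.choose 2 + 1)).filter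
        (fun m : ℕ => (m : ℝ) < tR),
        ((k.choose 2).choose m : ℝ) * p ^ m * (1 - p) ^ (k.choose 2 - m)
      ≤ (tR + 1) * B := by
    have hpt : ∀ m ∈ (Finset.range (k.choose 2 + 1)).filter (fun m : ℕ => (m : ℝ) < tR),
        ((k.choose 2).choose m : ℝ) * p ^ m * (1 - p) ^ (k.choose 2 - m) ≤ B := by
      intro m hm
      rw [Finset.mem_filter, Finset.mem_range] at hm
      obtain ⟨hm1, hm2⟩ := hm
      have hmK : m ≤ k.choose 2 := Nat.lt_succ_iff.mp hm1
      have e1 : (1 - p) ^ (k.choose 2 - m) = (1-p) ^ (k.choose 2) / (1-p) ^ m :=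
        pow_sub₀ _ (by linarith) hmK
      have c1 : ((k.choose 2).choose m : ℝ) ≤ KR ^ m := by
        rw [← hKcast]
        exact_mod_cast Nat.choose_le_pow (k.choose 2) m
      have step : ((k.choose 2).choose m : ℝ) * p ^ m * (1 - p) ^ (k.choose 2 - m)
          ≤ (KR * p / (1-p)) ^ m * (1-p) ^ (k.choose 2) := by
        rw [e1]
        calc ((k.choose 2).choose m : ℝ) * p ^ m * ((1-p) ^ (k.choose 2) / (1-p)^m)
            = ((k.choose 2).choose m : ℝ) * ((p/(1-p))^m * (1-p) ^ (k.choose 2)) := by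
              rw [div_pow]; field_simp
          _ ≤ KR^m * ((p/(1-p))^m * (1-p) ^ (k.choose 2)) := by
              apply mul_le_mul_of_nonneg_right c1 (by positivity)
          _ = (KR * p / (1-p)) ^ m * (1-p) ^ (k.choose 2) := by
              rw [mul_div_assoc, mul_pow]; ring
      refine step.trans ?_
      have s2 : (KR * p / (1-p)) ^ m ≤ A ^ tR := by
        calc (KR * p / (1-p)) ^ m ≤ A ^ m := by
              apply pow_le_pow_left₀ (by positivity)
              rw [hAdef]; linarith
          _ = A ^ ((m:ℕ):ℝ) := (Real.rpow_natCast A m).symm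
          _ ≤ A ^ tR := Real.rpow_le_rpow_of_exponent_le hA1 hm2.le
      rw [hBdef]
      exact mul_le_mul_of_nonneg_right s2 (by positivity)
    have card_le : (((Finset.range (k.choose 2 + 1)).filter (fun m : ℕ => (m : ℝ) < tR)).card : ℝ)
        ≤ tR + 1 := by
      have hsub : (Finset.range (k.choose 2 + 1)).filter (fun m : ℕ => (m : ℝ) < tR)
          ⊆ Finset.range ⌈tR⌉₊ := by
        intro m hm
        rw [Finset.mem_filter] at hm
        exact Finset.mem_range.mpr (Nat.lt_ceil.mpr hm.2)
      calc (((Finset.range (k.choose 2 + 1)).filter (fun m : ℕ => (m : ℝ) < tR)).card : ℝ)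
          ≤ ((⌈tR⌉₊ : ℕ) : ℝ) := by
            exact_mod_cast (Finset.card_le_card hsub).trans_eq (Finset.card_range _)
        _ ≤ tR + 1 := (Nat.ceil_lt_add_one htR0).le
    calc ∑ m ∈ (Finset.range (k.choose 2 + 1)).filter (fun m : ℕ => (m : ℝ) < tR),
          ((k.choose 2).choose m : ℝ) * p ^ m * (1 - p) ^ (k.choose 2 - m)
        ≤ (((Finset.range (k.choose 2 + 1)).filter (fun m : ℕ => (m : ℝ) < tR)).card : ℝ) * B := by
          rw [← nsmul_eq_mul]
          exact Finset.sum_le_card_nsmul _ _ _ hpt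
      _ ≤ (tR + 1) * B := by apply mul_le_mul_of_nonneg_right card_le hB0
  have hch := my_choose_le n k (by omega)
  have hinnernn : 0 ≤ ∑ m ∈ (Finset.range (k.choose 2 + 1)).filter
        (fun m : ℕ => (m : ℝ) < tR),
        ((k.choose 2).choose m : ℝ) * p ^ m * (1 - p) ^ (k.choose 2 - m) := by
    apply Finset.sum_nonneg; intro m _; positivity
  have hn0 : (0:ℝ) < (n:ℝ) := by
    have : (0:ℕ) < n := by omega
    exact_mod_cast this
  have hnk : (0:ℝ) < Real.exp 1 * n / k := by positivity
  have total : (n.choose k : ℝ) * ∑ m ∈ (Finset.range (k.choose 2 + 1)).filter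
        (fun m : ℕ => (m : ℝ) < tR),
        ((k.choose 2).choose m : ℝ) * p ^ m * (1 - p) ^ (k.choose 2 - m)
      ≤ (Real.exp 1 * n / k) ^ k * ((tR + 1) * B) := by
    apply mul_le_mul hch inner_le hinnernn (by positivity)
  refine total.trans ?_
  have e1 : Real.exp ((k:ℝ) * Real.log (Real.exp 1 * n / k)) = (Real.exp 1 * n / k) ^ k := by
    rw [← Real.log_pow, Real.exp_log (pow_pos hnk k)]
  have e2 : Real.exp (Real.log (tR + 1)) = tR + 1 := Real.exp_log (by linarith)
  have e3 : Real.exp (tR * Real.log A) = A ^ tR := by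
    rw [Real.rpow_def_of_pos hApos, mul_comm]
  have e4 : Real.exp (KR * Real.log (1-p)) = (1-p) ^ (k.choose 2) := by
    rw [← hKcast, ← Real.log_pow, Real.exp_log (pow_pos hq _)]
  have hexp : (Real.exp 1 * n / k) ^ k * ((tR + 1) * B)
      = Real.exp ((k:ℝ) * Real.log (Real.exp 1 * n / k) + Real.log (tR + 1)
          + (tR * Real.log A + KR * Real.log (1-p))) := by
    rw [Real.exp_add, Real.exp_add, Real.exp_add, e1, e2, e3, e4, hBdef]; ring
  rw [hexp]
  apply Real.exp_le_exp.mpr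
  have hlog1 : Real.log (Real.exp 1 * n / k) = 1 + Real.log n - Real.log k := by
    rw [Real.log_div (by positivity) (ne_of_gt hkpos),
      Real.log_mul (Real.exp_ne_zero 1) (ne_of_gt hn0), Real.log_exp]
  rw [hlog1, hlq]
  linarith [hmain]

noncomputable def Lf7 (p : ℝ) (n : ℕ) : ℝ := Real.logb (1/(1-p)) n

noncomputable def Ff7 (p ε : ℝ) (n : ℕ) : ℝ :=
  2 * Lf7 p n - 2 * Real.logb (1/(1-p)) (Lf7 p n)
    + 2 * Real.logb (1/(1-p)) (Real.exp 1 / 2) + 1 + ε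


theorem stmt7 (p : ℝ) (hp : 0 < p) (hp1 : p < 1) (r μ : ℕ) (hr : 3 ≤ r)
    (ε : ℝ) (hε : 0 < ε) :
    Tendsto (fun n : ℕ =>
        ∑ k ∈ Finset.Icc (x0 p ε n + 1) n,
          (n.choose k : ℝ) *
            ∑ m ∈ (Finset.range (k.choose 2 + 1)).filter
                (fun m : ℕ => (m : ℝ) < (μ : ℝ) + ((r : ℝ) - 1) * ((k : ℝ) - (x0 p ε n : ℝ)) / 2),
              ((k.choose 2).choose m : ℝ) * p ^ m * (1 - p) ^ (k.choose 2 - m))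
      atTop (nhds 0) := by
  have hq : 0 < 1 - p := by linarith
  have hq1 : 1 - p < 1 := by linarith
  have hb1 : 1 < 1/(1-p) := one_lt_one_div hq hq1
  have hlb : 0 < Real.log (1/(1-p)) := Real.log_pos hb1
  obtain ⟨lb, hlbdef⟩ : ∃ lb:ℝ, lb = Real.log (1/(1-p)) := ⟨_, rfl⟩
  rw [← hlbdef] at hlb
  have hlq : Real.log (1 - p) = -lb := by
    rw [hlbdef, one_div, Real.log_inv]; ring
  obtain ⟨c, hcdef⟩ : ∃ c:ℝ, c = ε * lb / 8 := ⟨_, rfl⟩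
  have hc : 0 < c := by rw [hcdef]; positivity
  obtain ⟨ρ, hρdef⟩ : ∃ ρ:ℝ, ρ = Real.exp (-c) := ⟨_, rfl⟩
  have hρ0 : 0 < ρ := hρdef ▸ Real.exp_pos _
  have hρ1 : ρ < 1 := by rw [hρdef]; exact Real.exp_lt_one_iff.mpr (by linarith)
  have hx0def : ∀ n, x0 p ε n = (⌊Ff7 p ε n⌋).toNat := fun n => rfl
  have hLtop : Tendsto (fun n : ℕ => Lf7 p n) atTop atTop :=
    (Real.tendsto_logb_atTop hb1).comp tendsto_natCast_atTop_atTop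
  have hlogb_eval : ∀ x:ℝ, Real.logb (1/(1-p)) x = Real.log x / lb := fun x => by
    rw [Real.logb, ← hlbdef]
  have hlog2lt : Real.log 2 < 1 := by
    have := Real.log_two_lt_d9; linarith
  have he2log : Real.logb (1/(1-p)) (Real.exp 1/2) = (1 - Real.log 2)/lb := by
    rw [hlogb_eval, Real.log_div (Real.exp_ne_zero 1) two_ne_zero, Real.log_exp]
  have hFeval : ∀ n:ℕ, Ff7 p ε n
      = 2 * Lf7 p n - 2 * Real.log (Lf7 p n)/lb + 2*((1-Real.log 2)/lb) + 1 + ε := fun n => by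
    rw [Ff7, hlogb_eval (Lf7 p n), he2log]; ring
  have hLmul : ∀ n:ℕ, Lf7 p n * lb = Real.log n := fun n => by
    rw [Lf7, hlogb_eval]; field_simp
  -- eventually F ≥ L + 1
  have hFge : ∀ᶠ n : ℕ in atTop, Lf7 p n + 1 ≤ Ff7 p ε n := by
    have hev := my_ev_log_real (2/lb) 0 1 one_pos
    filter_upwards [hLtop.eventually hev] with n hn
    rw [hFeval n]
    have e1 : 2 * Real.log (Lf7 p n)/lb = (2/lb) * Real.log (Lf7 p n) := by ring
    have e2 : 0 ≤ 2*((1-Real.log 2)/lb) := by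
      have : 0 ≤ (1-Real.log 2)/lb := div_nonneg (by linarith) hlb.le
      linarith
    rw [one_mul, add_zero] at hn
    rw [e1]; linarith
  have hFtop : Tendsto (fun n => Ff7 p ε n) atTop atTop :=
    tendsto_atTop_mono' atTop hFge (tendsto_atTop_add_const_right atTop 1 hLtop)
  have hx0top : Tendsto (fun n => x0 p ε n) atTop atTop := by
    refine tendsto_atTop.mpr fun C => ?_
    filter_upwards [hFtop.eventually (eventually_ge_atTop ((C:ℝ)))] with n hn
    rw [hx0def n]
    have h1 : ((C:ℕ):ℤ) ≤ ⌊Ff7 p ε n⌋ := Int.le_floor.mpr (by exact_mod_cast hn)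
    calc C = (((C:ℕ):ℤ)).toNat := by simp
      _ ≤ (⌊Ff7 p ε n⌋).toNat := Int.toNat_le_toNat h1
  -- constants for the per-k conditions
  obtain ⟨K0, hK0⟩ := eventually_atTop.mp
    ((my_ev_log (2*((r:ℝ)-1)) (((r:ℝ)-1)*Real.log (p/(1-p)+1)) (lb/2) (by positivity)).and
     (my_ev_log (2*(μ:ℝ)+(r:ℝ)) (((μ:ℝ)+((r:ℝ)-1)/2)*Real.log (p/(1-p)+1)
        + Real.log ((μ:ℝ)+(r:ℝ)+1)) (ε*lb/8) (by positivity)))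
  -- u for condition f2
  have hu : 0 < 1 - Real.exp (-(ε*lb/4)) := by
    have : Real.exp (-(ε*lb/4)) < 1 := Real.exp_lt_one_iff.mpr (by nlinarith [mul_pos hε hlb])
    linarith
  have hevL := my_ev_log_real 1 0 ((1 - Real.exp (-(ε*lb/4))) * lb) (by positivity)
  -- the key eventual bound
  have key : ∀ᶠ n : ℕ in atTop,
      (∑ k ∈ Finset.Icc (x0 p ε n + 1) n,
          (n.choose k : ℝ) *
            ∑ m ∈ (Finset.range (k.choose 2 + 1)).filter
                (fun m : ℕ => (m : ℝ) < (μ : ℝ) + ((r : ℝ) - 1) * ((k : ℝ) - (x0 p ε n : ℝ)) / 2),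
              ((k.choose 2).choose m : ℝ) * p ^ m * (1 - p) ^ (k.choose 2 - m))
        ≤ ρ ^ (x0 p ε n + 1) * (1 - ρ)⁻¹ := by
    filter_upwards [hLtop.eventually hevL, hLtop.eventually (eventually_ge_atTop 1),
      hFtop.eventually (eventually_ge_atTop 0),
      hx0top.eventually (eventually_ge_atTop (K0+3))] with n hn2 hn1 hn3 hn4
    rw [one_mul, add_zero] at hn2
    have hfl0 : (0:ℤ) ≤ ⌊Ff7 p ε n⌋ := Int.floor_nonneg.mpr hn3
    have hcastx : ((x0 p ε n : ℕ) : ℝ) = ((⌊Ff7 p ε n⌋ : ℤ) : ℝ) := by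
      rw [hx0def n]
      exact_mod_cast congrArg (Int.cast : ℤ → ℝ) (Int.toNat_of_nonneg hfl0)
    have hxF1 : Ff7 p ε n - 1 < ((x0 p ε n : ℕ) : ℝ) := by
      rw [hcastx]; exact Int.sub_one_lt_floor _
    have hxF2 : ((x0 p ε n : ℕ) : ℝ) ≤ Ff7 p ε n := by
      rw [hcastx]; exact Int.floor_le _
    -- f1 (depends only on n)
    have hf1e : (Ff7 p ε n - 1) * lb
        = 2*Real.log n - 2*Real.log (Lf7 p n) + 2 - 2*Real.log 2 + ε*lb := by
      rw [hFeval n]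
      have h := hLmul n
      field_simp
      linear_combination (2:ℝ) * h
    have f1 : 2*Real.log n - 2*Real.log (Lf7 p n) + 2 - 2*Real.log 2 + ε*lb
        ≤ ((x0 p ε n : ℕ) : ℝ) * lb := by
      have := mul_le_mul_of_nonneg_right (le_of_lt hxF1) hlb.le
      calc 2*Real.log n - 2*Real.log (Lf7 p n) + 2 - 2*Real.log 2 + ε*lb
          = (Ff7 p ε n - 1) * lb := hf1e.symm
        _ ≤ ((x0 p ε n : ℕ) : ℝ) * lb := this
    -- per-k bound
    have per : ∀ k ∈ Finset.Icc (x0 p ε n + 1) n,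
        (n.choose k : ℝ) *
            ∑ m ∈ (Finset.range (k.choose 2 + 1)).filter
                (fun m : ℕ => (m : ℝ) < (μ : ℝ) + ((r : ℝ) - 1) * ((k : ℝ) - (x0 p ε n : ℝ)) / 2),
              ((k.choose 2).choose m : ℝ) * p ^ m * (1 - p) ^ (k.choose 2 - m)
          ≤ ρ ^ k := by
      intro k hk
      rw [Finset.mem_Icc] at hk
      obtain ⟨hk1, hk2⟩ := hk
      have hk3 : 3 ≤ k := by omega
      have hkK0 : K0 ≤ k := by omega
      obtain ⟨f3, f4⟩ := hK0 k hkK0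
      have hk1R : ((x0 p ε n : ℕ) : ℝ) + 1 ≤ (k:ℝ) := by exact_mod_cast hk1
      have hk3R : (3:ℝ) ≤ (k:ℝ) := by exact_mod_cast hk3
      -- f2 for this k
      have hkgtF : Ff7 p ε n < (k:ℝ) := by linarith [hxF1]
      have hFlow : 2*Lf7 p n - 2*Real.log (Lf7 p n)/lb ≤ Ff7 p ε n := by
        rw [hFeval n]
        have : 0 ≤ (1-Real.log 2)/lb := div_nonneg (by linarith) hlb.le
        linarith
      have hkk_ge : 2*(Real.exp (-(ε*lb/4)) * Lf7 p n) ≤ (k:ℝ) := by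
        have h2u : 2*Real.log (Lf7 p n)/lb ≤ 2*((1 - Real.exp (-(ε*lb/4))) * Lf7 p n) := by
          rw [div_le_iff₀ hlb]
          nlinarith [hn2]
        nlinarith [hFlow, hkgtF, h2u]
      have f2 : Real.log 2 + Real.log (Lf7 p n) - Real.log (k:ℝ) ≤ ε*lb/4 := by
        have hLpos : 0 < Lf7 p n := by linarith
        have heq : Real.log 2 + Real.log (Lf7 p n) - ε*lb/4
            = Real.log (2*(Real.exp (-(ε*lb/4)) * Lf7 p n)) := by
          rw [Real.log_mul two_ne_zero (by positivity),
            Real.log_mul (Real.exp_ne_zero _) (ne_of_gt hLpos), Real.log_exp]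
          ring
        have hle : Real.log (2*(Real.exp (-(ε*lb/4)) * Lf7 p n)) ≤ Real.log (k:ℝ) :=
          Real.log_le_log (by positivity) hkk_ge
        linarith [heq ▸ hle]
      -- assemble hmain via main_ineq
      have hmain := main_ineq p ε lb (r:ℝ) (μ:ℝ) hp hp1 hlb hε
        (by exact_mod_cast hr) (Nat.cast_nonneg μ)
        ((x0 p ε n : ℕ) : ℝ) (k:ℝ) (Lf7 p n) (Real.log n)
        (Nat.cast_nonneg _) hk1R hk3R f1 f2 f3 f4
      have := term_bound p hp hp1 r μ n k (x0 p ε n) lb c hlb hlq hk1 hk2 hk3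
        (by rw [hcdef]; exact hmain) hr
      calc (n.choose k : ℝ) *
            ∑ m ∈ (Finset.range (k.choose 2 + 1)).filter
                (fun m : ℕ => (m : ℝ) < (μ : ℝ) + ((r : ℝ) - 1) * ((k : ℝ) - (x0 p ε n : ℝ)) / 2),
              ((k.choose 2).choose m : ℝ) * p ^ m * (1 - p) ^ (k.choose 2 - m)
          ≤ Real.exp (-c * k) := this
        _ = ρ ^ k := by
            rw [hρdef, ← Real.exp_nat_mul]
            congr 1; ring
    -- sum up and geometric bound
    calc (∑ k ∈ Finset.Icc (x0 p ε n + 1) n,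
          (n.choose k : ℝ) *
            ∑ m ∈ (Finset.range (k.choose 2 + 1)).filter
                (fun m : ℕ => (m : ℝ) < (μ : ℝ) + ((r : ℝ) - 1) * ((k : ℝ) - (x0 p ε n : ℝ)) / 2),
              ((k.choose 2).choose m : ℝ) * p ^ m * (1 - p) ^ (k.choose 2 - m))
        ≤ ∑ k ∈ Finset.Icc (x0 p ε n + 1) n, ρ ^ k := Finset.sum_le_sum per
      _ ≤ ρ ^ (x0 p ε n + 1) * (1 - ρ)⁻¹ := by
          by_cases hcase : x0 p ε n + 1 ≤ n + 1
          · rw [← Finset.Ico_add_one_right_eq_Icc, Finset.sum_Ico_eq_sub _ hcase,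
              geom_sum_eq (ne_of_lt hρ1), geom_sum_eq (ne_of_lt hρ1)]
            rw [div_sub_div_same, div_le_iff_of_neg (by linarith : ρ - 1 < 0)]
            have h1ρ : (1:ℝ) - ρ ≠ 0 := by linarith
            have hinv : ρ ^ (x0 p ε n + 1) * (1-ρ)⁻¹ * (ρ - 1) = -ρ^(x0 p ε n + 1) := by
              field_simp
              ring
            rw [hinv]
            have : (0:ℝ) ≤ ρ^(n+1) := by positivity
            linarith
          · have hempty : Finset.Icc (x0 p ε n + 1) n = ∅ := by
              rw [Finset.Icc_eq_empty]; omega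
            rw [hempty, Finset.sum_empty]
            exact mul_nonneg (pow_nonneg hρ0.le _) (inv_nonneg.mpr (by linarith))
  -- conclude by squeezing
  have hub : Tendsto (fun n => ρ ^ (x0 p ε n + 1) * (1 - ρ)⁻¹) atTop (nhds 0) := by
    have h1 : Tendsto (fun j:ℕ => ρ^j) atTop (nhds 0) :=
      tendsto_pow_atTop_nhds_zero_of_lt_one hρ0.le hρ1
    have h2 : Tendsto (fun n => x0 p ε n + 1) atTop atTop :=
      tendsto_atTop_mono (fun n => Nat.le_succ _) hx0top
    have := (h1.comp h2).mul_const ((1-ρ)⁻¹)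
    simpa using this
  refine tendsto_of_tendsto_of_tendsto_of_le_of_le' tendsto_const_nhds hub ?_ key
  filter_upwards with n
  apply Finset.sum_nonneg
  intro k _
  apply mul_nonneg (Nat.cast_nonneg _)
  apply Finset.sum_nonneg
  intro m _
  have : (0:ℝ) ≤ 1 - p := hq.le
  positivity
end
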